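/- Let κ be an infinite cardinal and let λ be the smallest cardinal for which κ^λ > κ. Then the set D = ⋃_{α<λ} κ^α of all functions from ordinals α < λ into κ has cardinality κ. -/

import Mathlib

universe u

/-- An element of `D = ⋃_{α<λ} κ^α`: a function from an ordinal `dom < λ` into
(the ordinals below) `κ`, encoded as a total function on ordinals that is zero
outside its domain (so that each such partial function has a unique encoding). -/
structure SmallTreeFn (κ lam : Cardinal.{u}) : Type (u + 1) where
  dom : Ordinal.{u}
  dom_lt : dom < lam.ord
  toFun : Ordinal.{u} → Ordinal.{u}
  lt_of_mem : ∀ i < dom, toFun i < κ.ord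
  eq_zero_of_le : ∀ i, dom ≤ i → toFun i = 0

/-- The equivalence of `SmallTreeFn κ lam` with a sigma type of honest function
spaces. -/
noncomputable def smallTreeFnEquiv (κ lam : Cardinal.{u}) :
    SmallTreeFn κ lam ≃ Σ α : Set.Iio lam.ord, (Set.Iio α.1 → Set.Iio κ.ord) where
  toFun f := ⟨⟨f.dom, f.dom_lt⟩, fun i => ⟨f.toFun i.1, f.lt_of_mem i.1 i.2⟩⟩
  invFun p :=
    { dom := p.1.1
      dom_lt := p.1.2
      toFun := fun i => if h : i < p.1.1 then (p.2 ⟨i, h⟩).1 else 0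
      lt_of_mem := fun i hi => by simp only [dif_pos hi]; exact (p.2 ⟨i, hi⟩).2
      eq_zero_of_le := fun i hi => dif_neg (not_lt.2 hi) }
  left_inv f := by
    cases f with
    | mk d hd t h1 h2 =>
      simp only [SmallTreeFn.mk.injEq, true_and]
      congr 1
      funext i
      by_cases h : i < d
      · simp [dif_pos h]
      · simp [dif_neg h, h2 i (not_lt.1 h)]
  right_inv p := by
    obtain ⟨⟨α, hα⟩, g⟩ := p
    refine Sigma.ext rfl (heq_of_eq ?_)
    funext i
    exact Subtype.ext (dif_pos i.2)

theorem card_smallTreeFn (κ lam : Cardinal.{u})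
    (hκ : Cardinal.aleph0 ≤ κ) (hlam : κ < κ ^ lam)
    (hleast : ∀ μ : Cardinal.{u}, μ < lam → κ ^ μ ≤ κ) :
    Cardinal.mk (SmallTreeFn κ lam) = Cardinal.lift.{u + 1} κ := by
  have hlamκ : lam ≤ κ := by
    by_contra h
    exact absurd (hleast κ (not_le.1 h)) (not_le.2 ((Cardinal.cantor κ).trans_eq
      (Cardinal.power_self_eq hκ).symm))
  have hone : 1 < lam := by
    by_contra h
    have : κ ^ lam ≤ κ ^ (1 : Cardinal) :=
      Cardinal.power_le_power_left (Cardinal.aleph0_pos.trans_le hκ).ne' (not_lt.1 h)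
    rw [Cardinal.power_one] at this
    exact absurd (hlam.trans_le this) (lt_irrefl κ)
  apply le_antisymm
  · rw [Cardinal.mk_congr (smallTreeFnEquiv κ lam), Cardinal.mk_sigma]
    have hterm : ∀ α : Set.Iio lam.ord,
        Cardinal.mk (Set.Iio α.1 → Set.Iio κ.ord) ≤ Cardinal.lift.{u+1} κ := by
      rintro ⟨α, hα⟩
      rw [← Cardinal.power_def, Ordinal.mk_Iio_ordinal, Ordinal.mk_Iio_ordinal,
        Cardinal.card_ord, ← Cardinal.lift_power]
      exact Cardinal.lift_le.2 (hleast _ (Cardinal.lt_ord.1 hα))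
    calc (Cardinal.sum fun α : Set.Iio lam.ord =>
          Cardinal.mk (Set.Iio α.1 → Set.Iio κ.ord))
        ≤ Cardinal.sum (fun _ : Set.Iio lam.ord => Cardinal.lift.{u+1} κ) :=
          Cardinal.sum_le_sum _ _ hterm
      _ = Cardinal.mk (Set.Iio lam.ord) * Cardinal.lift.{u+1} κ := by
          rw [Cardinal.sum_const']
      _ = Cardinal.lift.{u+1} lam * Cardinal.lift.{u+1} κ := by
          rw [Ordinal.mk_Iio_ordinal, Cardinal.card_ord]
      _ = Cardinal.lift.{u+1} (lam * κ) := by rw [Cardinal.lift_mul]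
      _ ≤ Cardinal.lift.{u+1} κ := by
          apply Cardinal.lift_le.2
          exact le_of_eq (Cardinal.mul_eq_right hκ hlamκ (zero_lt_one.trans hone).ne')
  · have hrw : Cardinal.lift.{u+1} κ = Cardinal.mk (Set.Iio κ.ord) := by
      rw [Ordinal.mk_Iio_ordinal, Cardinal.card_ord]
    rw [hrw]
    refine Cardinal.mk_le_of_injective (f := fun x : Set.Iio κ.ord =>
      (⟨1, Cardinal.lt_ord.2 (by simpa using hone),
        fun i => if i = 0 then x.1 else 0, ?_, ?_⟩ : SmallTreeFn κ lam)) ?_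
    · intro i hi
      obtain rfl := Ordinal.lt_one_iff_zero.1 hi
      simp only [if_pos rfl]
      exact x.2
    · intro i hi
      have : i ≠ 0 := by
        rintro rfl
        exact absurd hi (by simp)
      simp [this]
    · intro x y h
      have := congrArg (fun f => SmallTreeFn.toFun f 0) h
      simpa [Subtype.ext_iff] using this
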